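/- arXiv:2406.17288 — 2 statements merged into one kernel-verified Lean document; each statement's English description precedes it below -/
import Mathlib

section
/- For 0 < q < 1 and m, m' ∈ ℕ, the subspaces V_m of A(SU_q(2)) satisfy V_m · V_{m'} ⊆ V_{m+m'}. -/
noncomputable section

namespace QAlg

/-- Generators of a free *-algebra: `inl i` is the generator `z i`, and
`inr i` is its formal adjoint `(z i)*`. -/
abbrev Gen (X : Type) := X ⊕ X

/-- The free algebra on the doubled generating set, realized as the monoid
algebra of the free monoid. -/
abbrev F (X : Type) := MonoidAlgebra ℂ (FreeMonoid (Gen X))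

/-- The *-operation on words: reverse the word and exchange the two copies
of the generators. -/
def wordStar {X : Type} (w : FreeMonoid (Gen X)) : FreeMonoid (Gen X) :=
  FreeMonoid.ofList (((FreeMonoid.toList w).map Sum.swap).reverse)

lemma wordStar_mul {X : Type} (w v : FreeMonoid (Gen X)) :
    wordStar (w * v) = wordStar v * wordStar w := by
  simp [wordStar, FreeMonoid.toList_mul, FreeMonoid.ofList_append]

lemma wordStar_wordStar {X : Type} (w : FreeMonoid (Gen X)) : wordStar (wordStar w) = w := by
  simp [wordStar, List.map_reverse, List.map_map, Sum.swap_swap_eq]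

/-- The canonical conjugate-linear antimultiplicative involution on the free
algebra `F X`, determined by `star (z i) = (z i)*` and complex conjugation
on scalars. -/
def starF {X : Type} (f : F X) : F X :=
  Finsupp.sum f.coeff fun w c => MonoidAlgebra.single (wordStar w) ((starRingEnd ℂ) c)

lemma starF_single {X : Type} (w : FreeMonoid (Gen X)) (c : ℂ) :
    starF (MonoidAlgebra.single w c) = MonoidAlgebra.single (wordStar w) ((starRingEnd ℂ) c) := by
  classical
  unfold starF
  rw [MonoidAlgebra.coeff_single]
  refine Finsupp.sum_single_index ?_
  simp

lemma starF_zero {X : Type} : starF (0 : F X) = 0 := by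
  unfold starF
  rw [MonoidAlgebra.coeff_zero]
  exact Finsupp.sum_zero_index

lemma starF_add {X : Type} (f g : F X) : starF (f + g) = starF f + starF g := by
  classical
  unfold starF
  rw [MonoidAlgebra.coeff_add]
  refine Finsupp.sum_add_index' (fun w => by simp) (fun w c₁ c₂ => by
    simp [map_add, MonoidAlgebra.single_add])

lemma starF_single_mul {X : Type} (w : FreeMonoid (Gen X)) (c : ℂ) (g : F X) :
    starF (MonoidAlgebra.single w c * g) = starF g * starF (MonoidAlgebra.single w c) := by
  classical
  induction g using MonoidAlgebra.induction with
  | zero => simp [starF_zero]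
  | single_add v d g _ _ ihg =>
    rw [mul_add, starF_add, starF_add, add_mul, ihg]
    congr 1
    rw [MonoidAlgebra.single_mul_single, starF_single, starF_single, starF_single,
      MonoidAlgebra.single_mul_single, wordStar_mul, map_mul, mul_comm]

lemma starF_mul {X : Type} (f g : F X) : starF (f * g) = starF g * starF f := by
  classical
  induction f using MonoidAlgebra.induction with
  | zero => simp [starF_zero]
  | single_add w c f _ _ ih =>
    rw [add_mul, starF_add, starF_add, ih, mul_add, starF_single_mul]

lemma starF_starF {X : Type} (f : F X) : starF (starF f) = f := by
  classical
  induction f using MonoidAlgebra.induction with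
  | zero => simp [starF_zero]
  | single_add w c f _ _ ih =>
    rw [starF_add, starF_add, ih, starF_single, starF_single, wordStar_wordStar,
      Complex.conj_conj]

/-- The free *-algebra structure on `F X`. -/
def starRingF (X : Type) : StarRing (F X) where
  star := starF
  star_involutive := starF_starF
  star_mul := starF_mul
  star_add := starF_add

/-- The generator `z i` inside the free *-algebra. -/
def zF {X : Type} (i : X) : F X := MonoidAlgebra.of ℂ _ (FreeMonoid.of (Sum.inl i))

/-- The formal adjoint `(z i)*` inside the free *-algebra. -/
def zsF {X : Type} (i : X) : F X := MonoidAlgebra.of ℂ _ (FreeMonoid.of (Sum.inr i))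

/-- The defining relations of quantum `SU(2)` (with `zF 0 = α`, `zF 1 = β`,
`zsF i` playing the role of the adjoint generators), together with their
images under the *-operation. -/
inductive surel (q : ℝ) : F (Fin 2) → F (Fin 2) → Prop
  | r1 : surel q (zF 1 * zF 0) ((q : ℂ) • (zF 0 * zF 1))
  | r2 : surel q (zsF 1 * zF 0) ((q : ℂ) • (zF 0 * zsF 1))
  | r3 : surel q (zF 1 * zsF 1) (zsF 1 * zF 1)
  | r4 : surel q (zF 0 * zsF 0 + zF 1 * zsF 1) 1
  | r5 : surel q (zsF 0 * zF 0 + ((q ^ 2 : ℝ) : ℂ) • (zF 1 * zsF 1)) 1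
  | star_rel {a b} : surel q a b → surel q (starF a) (starF b)

/-- The coordinate *-algebra `A(SU_q(2))`. -/
abbrev SU (q : ℝ) := RingQuot (surel q)

noncomputable instance (q : ℝ) : StarRing (SU q) :=
  @RingQuot.starRing _ _ (starRingF _) (surel q) (fun _ _ h => surel.star_rel h)

/-- The generator `α` of `A(SU_q(2))`. -/
def αg (q : ℝ) : SU q := RingQuot.mkAlgHom ℂ (surel q) (zF 0)

/-- The generator `β` of `A(SU_q(2))`. -/
def βg (q : ℝ) : SU q := RingQuot.mkAlgHom ℂ (surel q) (zF 1)

/-- The elements `e_{j,k,l}` of `A(SU_q(2))`: `α^j β^k (β*)^l` for `j ≥ 0`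
and `β^k (β*)^l (α*)^{-j}` for `j < 0`. -/
def e (q : ℝ) (j : ℤ) (k l : ℕ) : SU q :=
  if 0 ≤ j then αg q ^ j.toNat * βg q ^ k * star (βg q) ^ l
  else βg q ^ k * star (βg q) ^ l * star (αg q) ^ (-j).toNat

/-- The subspace `V_m ⊆ A(SU_q(2))` spanned by the `e_{j,k,l}` with `k + l ≥ m`. -/
def V (q : ℝ) (m : ℕ) : Submodule ℂ (SU q) :=
  Submodule.span ℂ {x | ∃ (j : ℤ) (k l : ℕ), m ≤ k + l ∧ x = e q j k l}


/-! ### Auxiliary lemmas -/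

lemma mk_eq (q : ℝ) (y : F (Fin 2)) :
    RingQuot.mkAlgHom ℂ (surel q) y = ⟨Quot.mk _ y⟩ := by
  simp [RingQuot.mkAlgHom_def, RingQuot.mkRingHom_def]

lemma star_mk (q : ℝ) (x : F (Fin 2)) :
    star (RingQuot.mkAlgHom ℂ (surel q) x) = RingQuot.mkAlgHom ℂ (surel q) (starF x) := by
  rw [mk_eq, mk_eq]
  letI : StarRing (F (Fin 2)) := starRingF _
  exact rfl

lemma starF_z {X : Type} (i : X) : starF (zF i) = zsF i := by
  simp [zF, zsF, MonoidAlgebra.of_apply, starF_single, wordStar]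

lemma starF_zs {X : Type} (i : X) : starF (zsF i) = zF i := by
  simp [zF, zsF, MonoidAlgebra.of_apply, starF_single, wordStar]

lemma starF_smul {X : Type} (c : ℂ) (f : F X) :
    starF (c • f) = (starRingEnd ℂ) c • starF f := by
  classical
  induction f using MonoidAlgebra.induction with
  | zero => simp [starF_zero]
  | single_add w d g _ _ ih =>
    rw [smul_add, starF_add, starF_add, ih, MonoidAlgebra.smul_single, starF_single, starF_single,
      smul_add, MonoidAlgebra.smul_single, smul_eq_mul, smul_eq_mul, map_mul]

section Rels

variable (q : ℝ)

lemma star_a : star (αg q) = RingQuot.mkAlgHom ℂ (surel q) (zsF 0) := by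
  rw [αg, star_mk, starF_z]

lemma star_b : star (βg q) = RingQuot.mkAlgHom ℂ (surel q) (zsF 1) := by
  rw [βg, star_mk, starF_z]

lemma rel1 : βg q * αg q = (q : ℂ) • (αg q * βg q) := by
  rw [αg, βg, ← map_mul, ← map_mul, ← map_smul]
  exact RingQuot.mkAlgHom_rel ℂ surel.r1

lemma rel2 : star (βg q) * αg q = (q : ℂ) • (αg q * star (βg q)) := by
  rw [star_b, αg, ← map_mul, ← map_mul, ← map_smul]
  exact RingQuot.mkAlgHom_rel ℂ surel.r2

lemma rel3 : βg q * star (βg q) = star (βg q) * βg q := by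
  rw [star_b, βg, ← map_mul, ← map_mul]
  exact RingQuot.mkAlgHom_rel ℂ surel.r3

lemma rel4 : αg q * star (αg q) + βg q * star (βg q) = 1 := by
  rw [star_a, star_b, αg, βg, ← map_mul, ← map_mul, ← map_add,
    ← map_one (RingQuot.mkAlgHom ℂ (surel q))]
  exact RingQuot.mkAlgHom_rel ℂ surel.r4

lemma rel5 : star (αg q) * αg q + ((q ^ 2 : ℝ) : ℂ) • (βg q * star (βg q)) = 1 := by
  rw [star_a, star_b, αg, βg, ← map_mul, ← map_mul, ← map_smul, ← map_add,
    ← map_one (RingQuot.mkAlgHom ℂ (surel q))]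
  exact RingQuot.mkAlgHom_rel ℂ surel.r5

lemma rel1s : star (αg q) * star (βg q) = (q : ℂ) • (star (βg q) * star (αg q)) := by
  have h := RingQuot.mkAlgHom_rel ℂ (surel.star_rel (surel.r1 (q := q)))
  rw [starF_mul, starF_smul, starF_mul, starF_z, starF_z, Complex.conj_ofReal] at h
  rw [star_a, star_b, ← map_mul, ← map_mul, ← map_smul]
  exact h

lemma rel2s : star (αg q) * βg q = (q : ℂ) • (βg q * star (αg q)) := by
  have h := RingQuot.mkAlgHom_rel ℂ (surel.star_rel (surel.r2 (q := q)))
  rw [starF_mul, starF_smul, starF_mul, starF_z, starF_zs, Complex.conj_ofReal] at h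
  rw [star_a, βg, ← map_mul, ← map_mul, ← map_smul]
  exact h

lemma rel4' : αg q * star (αg q) = 1 - βg q * star (βg q) :=
  eq_sub_of_add_eq (rel4 q)

lemma rel5' : star (αg q) * αg q = 1 - ((q ^ 2 : ℝ) : ℂ) • (βg q * star (βg q)) :=
  eq_sub_of_add_eq (rel5 q)

variable {q}

lemma rel2s' (hq : (q : ℂ) ≠ 0) : βg q * star (αg q) = (q : ℂ)⁻¹ • (star (αg q) * βg q) := by
  rw [rel2s, smul_smul, inv_mul_cancel₀ hq, one_smul]

lemma rel1s' (hq : (q : ℂ) ≠ 0) : star (βg q) * star (αg q) = (q : ℂ)⁻¹ • (star (αg q) * star (βg q)) := by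
  rw [rel1s, smul_smul, inv_mul_cancel₀ hq, one_smul]

end Rels

section Moves

variable {q : ℝ}

/-- Move `y^n` past `x`, with a continuation `z`. -/
lemma swapw {x y : SU q} {c : ℂ} (h : y * x = c • (x * y)) (n : ℕ) (z : SU q) :
    y ^ n * (x * z) = c ^ n • (x * (y ^ n * z)) := by
  induction n with
  | zero => simp
  | succ n ih =>
    rw [pow_succ' y n, mul_assoc, ih, mul_smul_comm, ← mul_assoc, h, smul_mul_assoc, smul_smul,
      ← pow_succ c n, mul_assoc, mul_assoc]

lemma swap_pow {x y : SU q} {c : ℂ} (h : y * x = c • (x * y)) (n : ℕ) :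
    y ^ n * x = c ^ n • (x * y ^ n) := by
  simpa using swapw h n 1

end Moves

section Mem

variable {q : ℝ}

lemma e_mem_V {m : ℕ} (j : ℤ) {k l : ℕ} (h : m ≤ k + l) : e q j k l ∈ V q m :=
  Submodule.subset_span ⟨j, k, l, h, rfl⟩

lemma V_mono {m m' : ℕ} (h : m ≤ m') : V q m' ≤ V q m :=
  Submodule.span_mono (fun x hx => by
    obtain ⟨j, k, l, hk, hx⟩ := hx
    exact ⟨j, k, l, le_trans h hk, hx⟩)

end Mem

section EMul

variable {q : ℝ}

lemma hc1 : star (βg q) * βg q = (1 : ℂ) • (βg q * star (βg q)) := by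
  rw [one_smul, rel3]

lemma hc1' : βg q * star (βg q) = (1 : ℂ) • (star (βg q) * βg q) := by
  rw [one_smul, rel3]

lemma e_mul_b (j : ℤ) (k l : ℕ) : e q j k l * βg q ∈ V q (k + l + 1) := by
  by_cases hj : 0 ≤ j
  · have key : e q j k l * βg q = e q j (k + 1) l := by
      rw [e, if_pos hj, e, if_pos hj, mul_assoc, swap_pow hc1 l, one_pow, one_smul,
        ← mul_assoc, mul_assoc (αg q ^ j.toNat), ← pow_succ]
    rw [key]
    exact e_mem_V j (by omega)
  · have key : e q j k l * βg q = (q : ℂ) ^ (-j).toNat • e q j (k + 1) l := by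
      rw [e, if_neg hj, e, if_neg hj, mul_assoc, swap_pow (rel2s q) ((-j).toNat),
        mul_smul_comm, mul_assoc, swapw hc1 l, one_pow, one_smul, ← mul_assoc, ← pow_succ,
        ← mul_assoc]
    rw [key]
    exact Submodule.smul_mem _ _ (e_mem_V j (by omega))

lemma e_mul_bs (j : ℤ) (k l : ℕ) : e q j k l * star (βg q) ∈ V q (k + l + 1) := by
  by_cases hj : 0 ≤ j
  · have key : e q j k l * star (βg q) = e q j k (l + 1) := by
      rw [e, if_pos hj, e, if_pos hj, mul_assoc, ← pow_succ]
    rw [key]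
    exact e_mem_V j (by omega)
  · have key : e q j k l * star (βg q) = (q : ℂ) ^ (-j).toNat • e q j k (l + 1) := by
      rw [e, if_neg hj, e, if_neg hj, mul_assoc, swap_pow (rel1s q) ((-j).toNat),
        mul_smul_comm, mul_assoc, ← mul_assoc (star (βg q) ^ l), ← pow_succ, ← mul_assoc]
    rw [key]
    exact Submodule.smul_mem _ _ (e_mem_V j (by omega))

lemma e_neg_assoc (j : ℤ) (hj : ¬ 0 ≤ j) (m k l : ℕ) (hm : (-j).toNat = m) :
    βg q ^ k * star (βg q) ^ l * star (αg q) ^ m = e q j k l := by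
  rw [e, if_neg hj, hm]

lemma e_pos_assoc (j : ℤ) (hj : 0 ≤ j) (m k l : ℕ) (hm : j.toNat = m) :
    αg q ^ m * (βg q ^ k * star (βg q) ^ l) = e q j k l := by
  rw [e, if_pos hj, hm, mul_assoc]

/-- `B^k Bs^l As^m = e q i k l` when `(-i).toNat = m` and `i ≤ 0`. -/
lemma e_nonpos_assoc (i : ℤ) (hi : i ≤ 0) (m k l : ℕ) (hm : (-i).toNat = m) :
    βg q ^ k * star (βg q) ^ l * star (αg q) ^ m = e q i k l := by
  by_cases h : 0 ≤ i
  · have hi0 : i = 0 := le_antisymm hi h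
    subst hi0
    have hm0 : m = 0 := by omega
    subst hm0
    rw [e, if_pos le_rfl]
    simp
  · exact e_neg_assoc i h m k l hm

lemma bs_move (k : ℕ) (z : SU q) :
    star (βg q) * (βg q ^ k * z) = βg q ^ k * (star (βg q) * z) := by
  have h := swapw hc1' k z
  rw [one_pow, one_smul] at h
  exact h.symm

lemma e_mul_a (j : ℤ) (k l : ℕ) : e q j k l * αg q ∈ V q (k + l) := by
  by_cases hj : 0 ≤ j
  · have key : e q j k l * αg q = ((q : ℂ) ^ l * (q : ℂ) ^ k) • e q (j + 1) k l := by
      rw [← e_pos_assoc (j+1) (by omega) (j.toNat + 1) k l (by omega),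
        e, if_pos hj, mul_assoc, swap_pow (rel2 q) l, mul_smul_comm, mul_assoc,
        swapw (rel1 q) k, mul_smul_comm, smul_smul, ← mul_assoc, ← pow_succ]
    rw [key]
    exact Submodule.smul_mem _ _ (e_mem_V (j+1) le_rfl)
  · obtain ⟨m, hm⟩ : ∃ m, (-j).toNat = m + 1 := ⟨(-j).toNat - 1, by omega⟩
    have hAsA : star (αg q) ^ (-j).toNat * αg q =
        star (αg q) ^ m - (((q ^ 2 : ℝ) : ℂ) * (q : ℂ) ^ m * (q : ℂ) ^ m) •
          (βg q * (star (βg q) * star (αg q) ^ m)) := by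
      rw [hm, pow_succ, mul_assoc, rel5', mul_sub, mul_one, mul_smul_comm,
        swapw (rel2s q) m (star (βg q)), swap_pow (rel1s q) m, mul_smul_comm, smul_smul,
        smul_smul]
    have key : e q j k l * αg q = e q (j + 1) k l -
        (((q ^ 2 : ℝ) : ℂ) * (q : ℂ) ^ m * (q : ℂ) ^ m) • e q (j + 1) (k + 1) (l + 1) := by
      rw [e, if_neg hj, mul_assoc, hAsA, mul_sub, mul_smul_comm,
        e_nonpos_assoc (j+1) (by omega) m k l (by omega)]
      congr 1
      rw [← e_nonpos_assoc (j+1) (by omega) m (k+1) (l+1) (by omega)]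
      congr 1
      rw [mul_assoc, swapw hc1 l, one_pow, one_smul, ← mul_assoc, ← mul_assoc, ← pow_succ,
        mul_assoc, ← mul_assoc (star (βg q) ^ l), ← pow_succ, ← mul_assoc, mul_assoc]
    rw [key]
    exact Submodule.sub_mem _ (e_mem_V (j+1) le_rfl)
      (Submodule.smul_mem _ _ (e_mem_V (j+1) (by omega)))

lemma e_mul_as (hq : (q : ℂ) ≠ 0) (j : ℤ) (k l : ℕ) :
    e q j k l * star (αg q) ∈ V q (k + l) := by
  by_cases hj : 0 ≤ j
  · rcases Nat.eq_zero_or_eq_succ_pred j.toNat with h0 | hsucc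
    · -- j = 0
      have hj0 : j = 0 := by omega
      subst hj0
      have key : e q 0 k l * star (αg q) = e q (-1) k l := by
        rw [← e_neg_assoc (-1) (by decide) 1 k l (by decide), e, if_pos le_rfl]
        simp [mul_assoc]
      rw [key]
      exact e_mem_V (-1) le_rfl
    · obtain ⟨m, hm⟩ : ∃ m, j.toNat = m + 1 := ⟨j.toNat - 1, hsucc⟩
      have hAAs : αg q ^ j.toNat * (star (αg q) * (βg q ^ k * star (βg q) ^ l)) =
          αg q ^ m * (βg q ^ k * star (βg q) ^ l) -
            αg q ^ m * (βg q ^ (k+1) * star (βg q) ^ (l+1)) := by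
        rw [hm, pow_succ, mul_assoc, ← mul_assoc (αg q), rel4', sub_mul, one_mul, mul_sub]
        congr 2
        rw [mul_assoc, bs_move, ← mul_assoc, ← pow_succ', ← pow_succ']
      have key : e q j k l * star (αg q) = ((q : ℂ)⁻¹ ^ l * (q : ℂ)⁻¹ ^ k) •
          (e q (j - 1) k l - e q (j - 1) (k + 1) (l + 1)) := by
        rw [e, if_pos hj, mul_assoc, swap_pow (rel1s' hq) l, mul_smul_comm, mul_assoc,
          swapw (rel2s' hq) k, mul_smul_comm, smul_smul, hAAs,
          e_pos_assoc (j-1) (by omega) m k l (by omega),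
          e_pos_assoc (j-1) (by omega) m (k+1) (l+1) (by omega)]
      rw [key]
      exact Submodule.smul_mem _ _ (Submodule.sub_mem _ (e_mem_V (j-1) le_rfl)
        (e_mem_V (j-1) (by omega)))
  · have key : e q j k l * star (αg q) = e q (j - 1) k l := by
      rw [e, if_neg hj, ← e_neg_assoc (j-1) (by omega) ((-j).toNat + 1) k l (by omega),
        pow_succ, mul_assoc, mul_assoc]
    rw [key]
    exact e_mem_V (j-1) le_rfl

end EMul

section Vlem

variable {q : ℝ}

lemma V_mul_gen (m : ℕ) (g : SU q) (d : ℕ)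
    (hg : ∀ j k l, e q j k l * g ∈ V q (k + l + d)) :
    ∀ x ∈ V q m, x * g ∈ V q (m + d) := by
  intro x hx
  induction hx using Submodule.span_induction with
  | mem x h =>
    obtain ⟨j, k, l, hk, rfl⟩ := h
    exact V_mono (by omega) (hg j k l)
  | zero => rw [zero_mul]; exact Submodule.zero_mem _
  | add x y hx hy ihx ihy => rw [add_mul]; exact Submodule.add_mem _ ihx ihy
  | smul c x hx ih => rw [smul_mul_assoc]; exact Submodule.smul_mem _ _ ih

lemma V_mul_pow_a (m n : ℕ) : ∀ x ∈ V q m, x * αg q ^ n ∈ V q m := by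
  induction n with
  | zero => intro x hx; simpa using hx
  | succ n ih =>
    intro x hx
    rw [pow_succ, ← mul_assoc]
    exact V_mul_gen m _ 0 (fun j k l => e_mul_a j k l) _ (ih x hx)

lemma V_mul_pow_as (hq : (q : ℂ) ≠ 0) (m n : ℕ) :
    ∀ x ∈ V q m, x * star (αg q) ^ n ∈ V q m := by
  induction n with
  | zero => intro x hx; simpa using hx
  | succ n ih =>
    intro x hx
    rw [pow_succ, ← mul_assoc]
    exact V_mul_gen m _ 0 (fun j k l => e_mul_as hq j k l) _ (ih x hx)

lemma V_mul_pow_b (m k : ℕ) : ∀ x ∈ V q m, x * βg q ^ k ∈ V q (m + k) := by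
  induction k with
  | zero => intro x hx; simpa using hx
  | succ k ih =>
    intro x hx
    rw [pow_succ, ← mul_assoc]
    exact V_mul_gen (m + k) _ 1 (fun j k l => e_mul_b j k l) _ (ih x hx)

lemma V_mul_pow_bs (m k : ℕ) : ∀ x ∈ V q m, x * star (βg q) ^ k ∈ V q (m + k) := by
  induction k with
  | zero => intro x hx; simpa using hx
  | succ k ih =>
    intro x hx
    rw [pow_succ, ← mul_assoc]
    exact V_mul_gen (m + k) _ 1 (fun j k l => e_mul_bs j k l) _ (ih x hx)

lemma V_mul_e (hq : (q : ℂ) ≠ 0) (m : ℕ) (x : SU q) (hx : x ∈ V q m) (j : ℤ) (k l : ℕ) :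
    x * e q j k l ∈ V q (m + (k + l)) := by
  rw [← add_assoc]
  by_cases hj : 0 ≤ j
  · rw [e, if_pos hj, ← mul_assoc, ← mul_assoc]
    exact V_mul_pow_bs (m + k) l _ (V_mul_pow_b m k _ (V_mul_pow_a m j.toNat x hx))
  · rw [e, if_neg hj, ← mul_assoc, ← mul_assoc]
    exact V_mul_pow_as hq (m + k + l) _ _
      (V_mul_pow_bs (m + k) l _ (V_mul_pow_b m k x hx))

end Vlem

/-- For `0 < q < 1` and `m, m' ∈ ℕ`, one has `V_m · V_{m'} ⊆ V_{m+m'}` in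
`A(SU_q(2))`. -/
theorem V_mul_V_subset (q : ℝ) (hq0 : 0 < q) (hq1 : q < 1) (m m' : ℕ) :
    ∀ x ∈ V q m, ∀ y ∈ V q m', x * y ∈ V q (m + m') := by
  intro x hx y hy
  have hq : (q : ℂ) ≠ 0 := Complex.ofReal_ne_zero.mpr hq0.ne'
  induction hy using Submodule.span_induction with
  | mem y h =>
    obtain ⟨j, k, l, hk, rfl⟩ := h
    exact V_mono (by omega) (V_mul_e hq m x hx j k l)
  | zero => rw [mul_zero]; exact Submodule.zero_mem _
  | add a b ha hb iha ihb => rw [mul_add]; exact Submodule.add_mem _ iha ihb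
  | smul c a ha ih => rw [mul_smul_comm]; exact Submodule.smul_mem _ _ ih

end QAlg
end
end

section
/- For n ≥ 1 and 0 ≤ q < 1, the quotient of A(S^{2n+1}_q) by its commutator ideal I_n is isomorphic as a *-algebra to the Laurent polynomial *-algebra ℂ[u, u⁻¹] (polynomial functions on the circle), via an isomorphism sending u to the class [z₀]. -/
noncomputable section

namespace QAlg

/-- The defining relations of the Vaksman-Soibelman quantum sphere
`S^{2n+1}_q` (with `zsF i` playing the role of `(z i)*`), together with their
images under the *-operation, so that the quotient below is the universal
unital *-algebra on the generators `z 0, ..., z n` with these relations. -/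
inductive srel (n : ℕ) (q : ℝ) : F (Fin (n + 1)) → F (Fin (n + 1)) → Prop
  | comm_zz {i j : Fin (n + 1)} (h : i < j) :
      srel n q (zF j * zF i) ((q : ℂ) • (zF i * zF j))
  | comm_zsz {i j : Fin (n + 1)} (h : i ≠ j) :
      srel n q (zsF i * zF j) ((q : ℂ) • (zF j * zsF i))
  | ccr (i : Fin (n + 1)) :
      srel n q (zsF i * zF i)
        (zF i * zsF i + ((1 - q ^ 2 : ℝ) : ℂ) • ∑ j ∈ Finset.Ioi i, zF j * zsF j)
  | sphere_eq : srel n q (∑ j, zF j * zsF j) 1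
  | star_rel {a b} : srel n q a b → srel n q (starF a) (starF b)

/-- The coordinate *-algebra `A(S^{2n+1}_q)` of the quantum sphere. -/
abbrev Sphere (n : ℕ) (q : ℝ) := RingQuot (srel n q)

noncomputable instance (n : ℕ) (q : ℝ) : StarRing (Sphere n q) :=
  @RingQuot.starRing _ _ (starRingF _) (srel n q) (fun _ _ h => srel.star_rel h)

/-- The generator `z i` of the quantum sphere algebra. -/
def z (n : ℕ) (q : ℝ) (i : Fin (n + 1)) : Sphere n q :=
  RingQuot.mkAlgHom ℂ (srel n q) (zF i)

/-- The commutator ideal of a ring: the two-sided ideal generated by all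
commutators `a * b - b * a`.  For a *-algebra this coincides with the
two-sided *-ideal generated by the commutators, since the star of a
commutator is again a commutator. -/
def commutatorIdeal (A : Type) [Ring A] : TwoSidedIdeal A :=
  TwoSidedIdeal.span {x | ∃ a b : A, x = a * b - b * a}

end QAlg

end

noncomputable section

namespace QAlg

/-- The Laurent polynomial algebra `ℂ[u, u⁻¹]`, realized as the group
algebra of `ℤ` over `ℂ`. -/
abbrev L := AddMonoidAlgebra ℂ ℤ

/-- The monomial `u^j` in `ℂ[u, u⁻¹]`. -/
def u (j : ℤ) : L := AddMonoidAlgebra.single j 1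

/-- The *-involution of `ℂ[u, u⁻¹]`, determined by `u* = u⁻¹` and complex
conjugation on coefficients: `(Σ aₖ u^k)* = Σ conj(aₖ) u^(-k)`. -/
def starL (f : L) : L :=
  Finsupp.sum f.coeff fun k c => AddMonoidAlgebra.single (-k) ((starRingEnd ℂ) c)

/-! ### Auxiliary lemmas about `u` and `starL` -/

lemma u_mul (a b : ℤ) : u a * u b = u (a + b) := by
  rw [u, u, u, AddMonoidAlgebra.single_mul_single, mul_one]

lemma u_zero : u 0 = 1 := rfl

lemma one_eq_single : (1 : L) = AddMonoidAlgebra.single (0 : ℤ) (1 : ℂ) := rfl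

lemma starL_single (k : ℤ) (c : ℂ) :
    starL (AddMonoidAlgebra.single k c) =
      AddMonoidAlgebra.single (-k) ((starRingEnd ℂ) c) := by
  classical
  unfold starL
  rw [AddMonoidAlgebra.coeff_single]
  refine Finsupp.sum_single_index ?_
  simp

lemma starL_zero : starL (0 : L) = 0 := by
  unfold starL
  rw [AddMonoidAlgebra.coeff_zero]
  exact Finsupp.sum_zero_index

lemma starL_add (f g : L) : starL (f + g) = starL f + starL g := by
  classical
  unfold starL
  rw [AddMonoidAlgebra.coeff_add]
  refine Finsupp.sum_add_index' (fun k => by simp) (fun k c₁ c₂ => by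
    simp [map_add, AddMonoidAlgebra.single_add])

lemma starL_single_mul (k : ℤ) (c : ℂ) (g : L) :
    starL (AddMonoidAlgebra.single k c * g) =
      starL (AddMonoidAlgebra.single k c) * starL g := by
  classical
  induction g using AddMonoidAlgebra.induction with
  | zero => simp [starL_zero]
  | single_add v d g _ _ ihg =>
    rw [mul_add, starL_add, starL_add, mul_add, ihg]
    congr 1
    rw [AddMonoidAlgebra.single_mul_single, starL_single, starL_single, starL_single,
      AddMonoidAlgebra.single_mul_single, map_mul, neg_add]

lemma starL_mul (f g : L) : starL (f * g) = starL f * starL g := by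
  classical
  induction f using AddMonoidAlgebra.induction with
  | zero => simp [starL_zero]
  | single_add w c f _ _ ih =>
    rw [add_mul, starL_add, starL_add, add_mul, ih, starL_single_mul]

lemma starL_one : starL (1 : L) = 1 := by
  rw [one_eq_single, starL_single, map_one, neg_zero]

lemma starL_smul (c : ℂ) (f : L) : starL (c • f) = (starRingEnd ℂ) c • starL f := by
  classical
  induction f using AddMonoidAlgebra.induction with
  | zero => simp [starL_zero]
  | single_add k d f _ _ ih =>
    rw [smul_add, starL_add, starL_add, smul_add, ih]
    congr 1
    rw [AddMonoidAlgebra.smul_single, starL_single, starL_single, AddMonoidAlgebra.smul_single,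
      smul_eq_mul, smul_eq_mul, map_mul]

lemma starL_u (k : ℤ) : starL (u k) = u (-k) := by
  rw [u, starL_single]; simp [u]

/-! ### The homomorphism to the Laurent polynomials -/

/-- Images of the doubled generators in `ℂ[u,u⁻¹]`: `z 0 ↦ u`, `(z 0)* ↦ u⁻¹`,
and all other generators go to `0`. -/
def gmap (n : ℕ) : Gen (Fin (n + 1)) → L
  | .inl i => if i = 0 then u 1 else 0
  | .inr i => if i = 0 then u (-1) else 0

/-- The induced monoid homomorphism on words. -/
def mword (n : ℕ) : FreeMonoid (Gen (Fin (n + 1))) →* L := FreeMonoid.lift (gmap n)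

/-- The induced algebra homomorphism on the free algebra. -/
def phi (n : ℕ) : F (Fin (n + 1)) →ₐ[ℂ] L :=
  MonoidAlgebra.lift ℂ L (FreeMonoid (Gen (Fin (n + 1)))) (mword n)

lemma phi_single (n : ℕ) (w : FreeMonoid (Gen (Fin (n + 1)))) (c : ℂ) :
    phi n (MonoidAlgebra.single w c) = c • mword n w :=
  MonoidAlgebra.lift_single _ _ _

lemma phi_zF (n : ℕ) (i : Fin (n + 1)) :
    phi n (zF i) = if i = 0 then u 1 else 0 := by
  rw [phi, zF, MonoidAlgebra.lift_of]
  rfl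

lemma phi_zsF (n : ℕ) (i : Fin (n + 1)) :
    phi n (zsF i) = if i = 0 then u (-1) else 0 := by
  rw [phi, zsF, MonoidAlgebra.lift_of]
  rfl

lemma gmap_swap (n : ℕ) (x : Gen (Fin (n + 1))) :
    gmap n (Sum.swap x) = starL (gmap n x) := by
  cases x with
  | inl i =>
    simp only [Sum.swap_inl, gmap]
    split_ifs <;> simp [starL_u, starL_zero]
  | inr i =>
    simp only [Sum.swap_inr, gmap]
    split_ifs <;> simp [starL_u, starL_zero]

lemma wordStar_of {X : Type} (x : Gen X) : wordStar (FreeMonoid.of x) = FreeMonoid.of (Sum.swap x) := rfl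

lemma wordStar_one {X : Type} : wordStar (1 : FreeMonoid (Gen X)) = 1 := rfl

lemma mword_wordStar (n : ℕ) (w : FreeMonoid (Gen (Fin (n + 1)))) :
    mword n (wordStar w) = starL (mword n w) := by
  induction w using FreeMonoid.recOn with
  | one => rw [wordStar_one, map_one, starL_one]
  | of_mul x w ih =>
    rw [wordStar_mul, map_mul, map_mul, wordStar_of, ih, starL_mul]
    have : mword n (FreeMonoid.of x) = gmap n x := rfl
    have h2 : mword n (FreeMonoid.of (Sum.swap x)) = gmap n (Sum.swap x) := rfl
    rw [this, h2, gmap_swap, mul_comm]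

lemma phi_starF (n : ℕ) (f : F (Fin (n + 1))) :
    phi n (starF f) = starL (phi n f) := by
  classical
  induction f using MonoidAlgebra.induction with
  | zero => rw [starF_zero, map_zero, starL_zero]
  | single_add w c f _ _ ih =>
    rw [starF_add, map_add, map_add, starL_add, ih]
    congr 1
    rw [starF_single, phi_single, phi_single, starL_smul, mword_wordStar]

lemma ne_zero_of_lt {n : ℕ} {i j : Fin (n + 1)} (h : i < j) : j ≠ 0 := by
  intro e
  subst e
  exact (Fin.not_lt_zero i) h

lemma phi_srel (n : ℕ) (q : ℝ) : ∀ ⦃a b⦄, srel n q a b → phi n a = phi n b := by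
  intro a b h
  induction h with
  | @comm_zz i j h =>
    rw [map_mul, map_smul, map_mul, phi_zF, phi_zF, if_neg (ne_zero_of_lt h)]
    simp
  | @comm_zsz i j h =>
    by_cases hj : j = 0
    · subst hj
      have hi : i ≠ 0 := fun e => h e
      rw [map_mul, map_smul, map_mul, phi_zsF, if_neg hi]
      simp
    · rw [map_mul, map_smul, map_mul, phi_zF, if_neg hj]
      simp
  | ccr i =>
    have hsum : (phi n) (∑ j ∈ Finset.Ioi i, zF j * zsF j) = 0 := by
      rw [map_sum]
      refine Finset.sum_eq_zero fun j hj => ?_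
      rw [map_mul, phi_zF, if_neg (ne_zero_of_lt (Finset.mem_Ioi.mp hj)), zero_mul]
    rw [map_add, map_smul, hsum, smul_zero, add_zero, map_mul, map_mul, phi_zF, phi_zsF]
    by_cases hi : i = 0
    · rw [if_pos hi, if_pos hi, u_mul, u_mul]
      norm_num
    · rw [if_neg hi, if_neg hi, zero_mul]
  | sphere_eq =>
    rw [map_sum, map_one]
    rw [Finset.sum_eq_single 0 (fun j _ hj => by
      rw [map_mul, phi_zF, if_neg hj, zero_mul]) (fun h => absurd (Finset.mem_univ _) h)]
    rw [map_mul, phi_zF, phi_zsF, if_pos rfl, if_pos rfl, u_mul]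
    norm_num [u_zero]
  | star_rel _ ih =>
    rw [phi_starF, phi_starF, ih]

/-- The homomorphism `A(S^{2n+1}_q) → ℂ[u,u⁻¹]`. -/
def Phi (n : ℕ) (q : ℝ) : Sphere n q →ₐ[ℂ] L :=
  RingQuot.liftAlgHom ℂ ⟨phi n, phi_srel n q⟩

lemma Phi_mk (n : ℕ) (q : ℝ) (f : F (Fin (n + 1))) :
    Phi n q (RingQuot.mkAlgHom ℂ (srel n q) f) = phi n f :=
  RingQuot.liftAlgHom_mkAlgHom_apply _ _ _ _

/-- `star` on the quantum sphere algebra is induced by `starF`. -/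
lemma star_mk_s10 (n : ℕ) (q : ℝ) (f : F (Fin (n + 1))) :
    star (RingQuot.mkRingHom (srel n q) f) = RingQuot.mkRingHom (srel n q) (starF f) := by
  rw [RingQuot.mkRingHom_def]
  rfl

/-- The quotient of the quantum sphere algebra by its commutator ideal. -/
abbrev QQ (n : ℕ) (q : ℝ) := (commutatorIdeal (Sphere n q)).ringCon.Quotient

/-- The quotient map. -/
abbrev mkQ (n : ℕ) (q : ℝ) : Sphere n q →+* QQ n q :=
  (commutatorIdeal (Sphere n q)).ringCon.mk'

lemma mkQ_surjective (n : ℕ) (q : ℝ) : Function.Surjective (mkQ n q) :=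
  fun y => Quotient.inductionOn' y fun a => ⟨a, rfl⟩

lemma mkQ_mul_comm (n : ℕ) (q : ℝ) (a b : Sphere n q) :
    mkQ n q a * mkQ n q b = mkQ n q b * mkQ n q a := by
  rw [← map_mul, ← map_mul]
  have h : (commutatorIdeal (Sphere n q)).ringCon (a * b) (b * a) := by
    rw [TwoSidedIdeal.rel_iff]
    exact TwoSidedIdeal.subset_span ⟨a, b, rfl⟩
  exact Quotient.sound' h

lemma QQ_mul_comm (n : ℕ) (q : ℝ) (x y : QQ n q) : x * y = y * x := by
  obtain ⟨a, rfl⟩ := mkQ_surjective n q x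
  obtain ⟨b, rfl⟩ := mkQ_surjective n q y
  exact mkQ_mul_comm n q a b

lemma Phi_congr (n : ℕ) (q : ℝ) : ∀ a b : Sphere n q,
    (commutatorIdeal (Sphere n q)).ringCon a b → Phi n q a = Phi n q b := by
  intro a b h
  rw [TwoSidedIdeal.rel_iff] at h
  have h2 : a - b ∈ TwoSidedIdeal.ker (Phi n q).toRingHom := by
    refine TwoSidedIdeal.mem_span_iff.mp h _ ?_
    rintro x ⟨s, t, rfl⟩
    rw [SetLike.mem_coe, TwoSidedIdeal.mem_ker]
    simp only [map_sub, map_mul, AlgHom.toRingHom_eq_coe, RingHom.coe_coe]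
    rw [mul_comm]
    exact sub_self _
  rw [TwoSidedIdeal.mem_ker] at h2
  have h3 : Phi n q a - Phi n q b = 0 := by
    simpa using h2
  exact sub_eq_zero.mp h3

/-- The induced homomorphism on the quotient. -/
def Psi (n : ℕ) (q : ℝ) : QQ n q →+* L where
  toFun := fun x => Quotient.liftOn' x (Phi n q) (Phi_congr n q)
  map_one' := map_one (Phi n q)
  map_mul' := fun x y => Quotient.inductionOn₂' x y fun a b => map_mul (Phi n q) a b
  map_zero' := map_zero (Phi n q)
  map_add' := fun x y => Quotient.inductionOn₂' x y fun a b => map_add (Phi n q) a b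

lemma Psi_mkQ (n : ℕ) (q : ℝ) (a : Sphere n q) : Psi n q (mkQ n q a) = Phi n q a := rfl

set_option maxHeartbeats 1600000 in
/-- For `n ≥ 1` and `0 ≤ q < 1`, the quotient of `A(S^{2n+1}_q)` by its
commutator ideal is *-isomorphic to the Laurent polynomial *-algebra
`ℂ[u, u⁻¹]`, via an isomorphism sending `u` to the class `[z 0]`. -/
theorem sphere_quotient_commutatorIdeal_iso_laurent (n : ℕ) (hn : 1 ≤ n)
    (q : ℝ) (hq0 : 0 ≤ q) (hq1 : q < 1) :
    ∃ eqv : (commutatorIdeal (Sphere n q)).ringCon.Quotient ≃+* L,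
      (∀ c : ℂ,
        eqv ((commutatorIdeal (Sphere n q)).ringCon.mk' (algebraMap ℂ (Sphere n q) c)) =
          algebraMap ℂ L c) ∧
      (∀ a : Sphere n q,
        eqv ((commutatorIdeal (Sphere n q)).ringCon.mk' (star a)) =
          starL (eqv ((commutatorIdeal (Sphere n q)).ringCon.mk' a))) ∧
      eqv.symm (u 1) = (commutatorIdeal (Sphere n q)).ringCon.mk' (z n q 0) := by
  classical
  set π : F (Fin (n + 1)) →ₐ[ℂ] Sphere n q := RingQuot.mkAlgHom ℂ (srel n q) with hπ
  set Z : Fin (n + 1) → QQ n q := fun i => mkQ n q (π (zF i)) with hZdef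
  set Zs : Fin (n + 1) → QQ n q := fun i => mkQ n q (π (zsF i)) with hZsdef
  have hmk : ∀ x : F (Fin (n + 1)), RingQuot.mkRingHom (srel n q) x = π x := fun x => by
    rw [hπ, ← RingQuot.mkAlgHom_coe ℂ]; rfl
  have hcomm := QQ_mul_comm n q
  -- cancellation by nonzero scalars
  have hcancel : ∀ (c : ℂ), c ≠ 0 → ∀ x : QQ n q,
      mkQ n q (algebraMap ℂ (Sphere n q) c) * x = 0 → x = 0 := by
    intro c hc x h
    calc x = mkQ n q (algebraMap ℂ (Sphere n q) c⁻¹) *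
          (mkQ n q (algebraMap ℂ (Sphere n q) c) * x) := by
          rw [← mul_assoc, ← map_mul, ← map_mul, inv_mul_cancel₀ hc, map_one, map_one, one_mul]
      _ = 0 := by rw [h, mul_zero]
  have hq_ne : (1 : ℂ) - (q : ℂ) ≠ 0 := by
    rw [sub_ne_zero]
    intro e
    have : (q : ℝ) = 1 := by exact_mod_cast e.symm
    exact absurd this (ne_of_lt hq1)
  have hq2_ne : ((1 - q ^ 2 : ℝ) : ℂ) ≠ 0 := by
    rw [Complex.ofReal_ne_zero]
    nlinarith
  -- derived relation: from `x = q • x` conclude `x = 0`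
  have hq_cancel : ∀ x : QQ n q, x = mkQ n q (algebraMap ℂ (Sphere n q) (q : ℂ)) * x → x = 0 := by
    intro x hx
    refine hcancel _ hq_ne x ?_
    simp only [map_sub, map_one]
    rw [sub_mul, one_mul, ← hx, sub_self]
  -- products of distinct generators vanish
  have hzz : ∀ i j : Fin (n + 1), i < j → Z i * Z j = 0 := by
    intro i j h
    have hs := RingQuot.mkAlgHom_rel ℂ (srel.comm_zz (q := q) h)
    simp only [map_mul, map_smul, Algebra.smul_def, AlgHom.commutes] at hs
    have h0 := congrArg (mkQ n q) hs
    simp only [map_mul] at h0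
    rw [hcomm (mkQ n q (π (zF j))) (mkQ n q (π (zF i)))] at h0
    exact hq_cancel _ h0
  have hzs : ∀ i j : Fin (n + 1), i ≠ j → Z j * Zs i = 0 := by
    intro i j h
    have hs := RingQuot.mkAlgHom_rel ℂ (srel.comm_zsz (q := q) h)
    simp only [map_mul, map_smul, Algebra.smul_def, AlgHom.commutes] at hs
    have h0 := congrArg (mkQ n q) hs
    simp only [map_mul] at h0
    rw [hcomm (mkQ n q (π (zsF i))) (mkQ n q (π (zF j)))] at h0
    exact hq_cancel _ h0
  -- the partial sums vanish
  have hS : ∀ i : Fin (n + 1), (∑ j ∈ Finset.Ioi i, Z j * Zs j) = 0 := by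
    intro i
    have hs := RingQuot.mkAlgHom_rel ℂ (srel.ccr (q := q) i)
    simp only [map_mul, map_add, map_smul, map_sum, Algebra.smul_def, AlgHom.commutes] at hs
    have h0 := congrArg (mkQ n q) hs
    simp only [map_mul, map_add, map_sum] at h0
    rw [hcomm (mkQ n q (π (zsF i))) (mkQ n q (π (zF i)))] at h0
    have h1 := (left_eq_add.mp h0)
    exact hcancel _ hq2_ne _ h1
  -- the sphere equation
  have hsphere : (∑ j : Fin (n + 1), Z j * Zs j) = 1 := by
    have hs := RingQuot.mkAlgHom_rel ℂ (srel.sphere_eq (n := n) (q := q))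
    simp only [map_sum, map_mul, map_one] at hs
    have h0 := congrArg (mkQ n q) hs
    simp only [map_sum, map_mul, map_one] at h0
    exact h0
  have hIoi : Finset.Ioi (0 : Fin (n + 1)) = Finset.univ.erase 0 := by
    ext j
    simp [Fin.pos_iff_ne_zero]
  have hZ0 : Z 0 * Zs 0 = 1 := by
    have h2 : Z 0 * Zs 0 + ∑ j ∈ Finset.Ioi 0, Z j * Zs j = ∑ j : Fin (n + 1), Z j * Zs j := by
      rw [hIoi]
      exact Finset.add_sum_erase Finset.univ (fun j => Z j * Zs j) (Finset.mem_univ 0)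
    rw [hS 0, add_zero, hsphere] at h2
    exact h2
  have hZs0 : Zs 0 * Z 0 = 1 := by rw [hcomm, hZ0]
  -- all other generators vanish in the quotient
  have hZ : ∀ i : Fin (n + 1), i ≠ 0 → Z i = 0 := by
    intro i hi
    calc Z i = Z i * (Zs 0 * Z 0) := by rw [hZs0, mul_one]
      _ = (Z i * Zs 0) * Z 0 := by rw [mul_assoc]
      _ = 0 := by rw [hzs 0 i (Ne.symm hi), zero_mul]
  have hZs : ∀ i : Fin (n + 1), i ≠ 0 → Zs i = 0 := by
    intro i hi
    calc Zs i = Zs i * (Z 0 * Zs 0) := by rw [hZ0, mul_one]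
      _ = (Zs i * Z 0) * Zs 0 := by rw [mul_assoc]
      _ = 0 := by rw [hcomm (Zs i) (Z 0), hzs i 0 hi, zero_mul]
  -- the unitary
  set W : (QQ n q)ˣ := ⟨Z 0, Zs 0, hZ0, hZs0⟩ with hW
  set C : ℂ →+* QQ n q :=
    (mkQ n q : Sphere n q →+* QQ n q).comp (algebraMap ℂ (Sphere n q)) with hC
  set g : Multiplicative ℤ →* QQ n q :=
    (Units.coeHom (QQ n q)).comp (zpowersHom (QQ n q)ˣ W) with hg
  set chi : L →+* QQ n q :=
    AddMonoidAlgebra.liftNCRingHom C g (fun c y => hcomm _ _) with hchi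
  have chi_single : ∀ (a : ℤ) (b : ℂ),
      chi (AddMonoidAlgebra.single a b) = C b * ((W ^ a : (QQ n q)ˣ) : QQ n q) := by
    intro a b
    exact AddMonoidAlgebra.liftNC_single _ _ _ _
  -- computations for `Psi`
  have hPsiC : ∀ c : ℂ, Psi n q (C c) = algebraMap ℂ L c := by
    intro c
    rw [hC]
    exact (Phi n q).commutes c
  set V : Lˣ := Units.map (Psi n q).toMonoidHom W with hV
  have hVval : (V : L) = u 1 := by
    show Psi n q (Z 0) = u 1
    rw [hZdef]
    show Phi n q (π (zF 0)) = u 1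
    rw [hπ, Phi_mk, phi_zF, if_pos rfl]
  have hVinv : ((V⁻¹ : Lˣ) : L) = u (-1) := by
    show Psi n q (Zs 0) = u (-1)
    rw [hZsdef]
    show Phi n q (π (zsF 0)) = u (-1)
    rw [hπ, Phi_mk, phi_zsF, if_pos rfl]
  have hPsiW : ∀ a : ℤ, Psi n q ((W ^ a : (QQ n q)ˣ) : QQ n q) = ((V ^ a : Lˣ) : L) := by
    intro a
    rw [hV, ← map_zpow (Units.map (Psi n q).toMonoidHom) W a, Units.coe_map]
    rfl
  have hVpow : ∀ a : ℤ, ((V ^ a : Lˣ) : L) = u a := by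
    intro a
    cases a with
    | ofNat m =>
      rw [Int.ofNat_eq_coe, zpow_natCast, Units.val_pow_eq_pow_val, hVval, u,
        AddMonoidAlgebra.single_pow, one_pow, u]
      norm_num
    | negSucc m =>
      rw [zpow_negSucc, ← inv_pow, Units.val_pow_eq_pow_val, hVinv, u,
        AddMonoidAlgebra.single_pow, one_pow, u]
      congr 1
      rw [Int.negSucc_eq]
      push_cast
      ring
  have hright : ∀ x : L, Psi n q (chi x) = x := by
    have hcomp : (Psi n q).comp chi = RingHom.id L := by
      refine AddMonoidAlgebra.ringHom_ext ?_ ?_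
      · intro b
        rw [RingHom.comp_apply, RingHom.id_apply, chi_single 0 b, zpow_zero, Units.val_one,
          mul_one, hPsiC]
        simp [AddMonoidAlgebra.coe_algebraMap]
      · intro a
        rw [RingHom.comp_apply, RingHom.id_apply, chi_single a 1, map_one, one_mul,
          hPsiW, hVpow, u]
    exact fun x => RingHom.congr_fun hcomp x
  -- the composite the other way is the identity
  have hgen : ∀ f : F (Fin (n + 1)),
      chi (Psi n q (mkQ n q (RingQuot.mkRingHom (srel n q) f))) =
        mkQ n q (RingQuot.mkRingHom (srel n q) f) := by
    have hcomp : ((chi.comp (Psi n q)).comp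
          ((mkQ n q : Sphere n q →+* QQ n q).comp (RingQuot.mkRingHom (srel n q)))) =
        ((mkQ n q : Sphere n q →+* QQ n q).comp (RingQuot.mkRingHom (srel n q))) := by
      refine MonoidAlgebra.ringHom_ext ?_ ?_
      · intro b
        have hb : MonoidAlgebra.single (1 : FreeMonoid (Gen (Fin (n + 1)))) b =
            algebraMap ℂ (F (Fin (n + 1))) b := rfl
        simp only [RingHom.comp_apply, hb, hmk, AlgHom.commutes]
        have : Psi n q (mkQ n q (algebraMap ℂ (Sphere n q) b)) = algebraMap ℂ L b := by
          rw [Psi_mkQ]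
          exact (Phi n q).commutes b
        rw [this]
        have hab : algebraMap ℂ L b = AddMonoidAlgebra.single (0 : ℤ) b := by
          simp [AddMonoidAlgebra.coe_algebraMap]
        rw [hab, chi_single, zpow_zero, Units.val_one, mul_one, hC]
        rfl
      · intro w
        induction w using FreeMonoid.recOn with
        | one =>
          have h1 : MonoidAlgebra.single (1 : FreeMonoid (Gen (Fin (n + 1)))) (1 : ℂ) =
              (1 : F (Fin (n + 1))) := rfl
          rw [h1, map_one, map_one]
        | of_mul x w ih =>
          have hsp : MonoidAlgebra.single (FreeMonoid.of x * w) (1 : ℂ) =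
              MonoidAlgebra.single (FreeMonoid.of x) (1 : ℂ) *
                MonoidAlgebra.single w (1 : ℂ) := by
            rw [MonoidAlgebra.single_mul_single, one_mul]
          rw [hsp, map_mul, map_mul, ih]
          congr 1
          -- the generator case
          have hgen1 : ∀ i : Fin (n + 1),
              chi (Psi n q (mkQ n q (RingQuot.mkRingHom (srel n q) (zF i)))) =
                mkQ n q (RingQuot.mkRingHom (srel n q) (zF i)) := by
            intro i
            rw [hmk, Psi_mkQ]
            show chi (Phi n q (π (zF i))) = Z i
            rw [hπ, Phi_mk, phi_zF]
            by_cases hi : i = 0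
            · subst hi
              rw [if_pos rfl, u, chi_single, show C (1 : ℂ) = 1 from map_one C, one_mul,
                zpow_one]
            · rw [if_neg hi, map_zero, hZ i hi]
          have hgen2 : ∀ i : Fin (n + 1),
              chi (Psi n q (mkQ n q (RingQuot.mkRingHom (srel n q) (zsF i)))) =
                mkQ n q (RingQuot.mkRingHom (srel n q) (zsF i)) := by
            intro i
            rw [hmk, Psi_mkQ]
            show chi (Phi n q (π (zsF i))) = Zs i
            rw [hπ, Phi_mk, phi_zsF]
            by_cases hi : i = 0
            · subst hi
              rw [if_pos rfl, u, chi_single, show C (1 : ℂ) = 1 from map_one C, one_mul,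
                zpow_neg_one]
              rfl
            · rw [if_neg hi, map_zero, hZs i hi]
          cases x with
          | inl i =>
            have : MonoidAlgebra.single (FreeMonoid.of (Sum.inl i : Gen (Fin (n + 1)))) (1 : ℂ) =
                zF i := rfl
            rw [this]
            exact hgen1 i
          | inr i =>
            have : MonoidAlgebra.single (FreeMonoid.of (Sum.inr i : Gen (Fin (n + 1)))) (1 : ℂ) =
                zsF i := rfl
            rw [this]
            exact hgen2 i
    exact fun f => RingHom.congr_fun hcomp f
  have hleft : ∀ x : QQ n q, chi (Psi n q x) = x := by
    intro x
    obtain ⟨s, rfl⟩ := mkQ_surjective n q x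
    obtain ⟨f, rfl⟩ := RingQuot.mkRingHom_surjective (srel n q) s
    exact hgen f
  refine ⟨⟨⟨Psi n q, chi, hleft, hright⟩, map_mul (Psi n q), map_add (Psi n q)⟩, ?_, ?_, ?_⟩
  · intro c
    show Psi n q (mkQ n q (algebraMap ℂ (Sphere n q) c)) = algebraMap ℂ L c
    rw [Psi_mkQ]
    exact (Phi n q).commutes c
  · intro a
    obtain ⟨f, rfl⟩ := RingQuot.mkRingHom_surjective (srel n q) a
    show Psi n q (mkQ n q (star (RingQuot.mkRingHom (srel n q) f))) =
      starL (Psi n q (mkQ n q (RingQuot.mkRingHom (srel n q) f)))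
    rw [star_mk_s10, hmk, hmk, Psi_mkQ, Psi_mkQ, hπ, Phi_mk, Phi_mk, phi_starF]
  · show chi (u 1) = mkQ n q (z n q 0)
    rw [u, chi_single, map_one, one_mul, zpow_one]
    rfl

end QAlg
end
end
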